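/- Let p ≥ 2 be an integer and let (τ,δ) ∈ 𝒯 with τ ≥ g_{p/2}(δ) = 2√δ cos(2π/p). Then T_p is a real number and T_p > 0. -/
import Mathlib


/-!
Context: given real τ, δ with δ > 0, let λ₁ = (τ + √(τ²−4δ))/2 and
λ₂ = (τ − √(τ²−4δ))/2 (complex principal square root).
S_j = Σ_{k=1}^{j} λ₁^{j−k} λ₂^{k−1}, T_j = Σ_{i=1}^{j−1} S_i.
g_q(δ) = 2√δ cos(π/q); 𝒯 = {(τ,δ) : 0 < δ < 1, |τ| < δ + 1}.
-/

/-- λ₁ = (τ + √(τ²−4δ))/2, using the complex principal square root. -/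
noncomputable def lam1 (τ δ : ℝ) : ℂ :=
  ((τ : ℂ) + ((τ : ℂ) ^ 2 - 4 * (δ : ℂ)) ^ ((1 : ℂ) / 2)) / 2

/-- λ₂ = (τ − √(τ²−4δ))/2, using the complex principal square root. -/
noncomputable def lam2 (τ δ : ℝ) : ℂ :=
  ((τ : ℂ) - ((τ : ℂ) ^ 2 - 4 * (δ : ℂ)) ^ ((1 : ℂ) / 2)) / 2

/-- S_j = Σ_{k=1}^{j} λ₁^{j−k} λ₂^{k−1} (index shifted: k = k'+1). -/
noncomputable def Sseq (τ δ : ℝ) (j : ℕ) : ℂ :=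
  ∑ k ∈ Finset.range j, lam1 τ δ ^ (j - 1 - k) * lam2 τ δ ^ k

/-- T_j = Σ_{i=1}^{j−1} S_i. -/
noncomputable def Tseq (τ δ : ℝ) (j : ℕ) : ℂ :=
  ∑ i ∈ Finset.Icc 1 (j - 1), Sseq τ δ i

/-- The real recursive sequence equal to `Sseq`. -/
noncomputable def sseq (τ δ : ℝ) : ℕ → ℝ
  | 0 => 0
  | 1 => 1
  | (n+2) => τ * sseq τ δ (n+1) - δ * sseq τ δ n

lemma cpow_half_mul_self (z : ℂ) : z ^ ((1:ℂ)/2) * z ^ ((1:ℂ)/2) = z := by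
  rcases eq_or_ne z 0 with h | h
  · simp [h, Complex.zero_cpow (by norm_num : (1:ℂ)/2 ≠ 0)]
  · rw [← Complex.cpow_add _ _ h]
    norm_num

lemma lam_add (τ δ : ℝ) : lam1 τ δ + lam2 τ δ = (τ : ℂ) := by
  rw [lam1, lam2]; ring

lemma lam_mul (τ δ : ℝ) : lam1 τ δ * lam2 τ δ = (δ : ℂ) := by
  rw [lam1, lam2]
  have := cpow_half_mul_self ((τ : ℂ) ^ 2 - 4 * (δ : ℂ))
  field_simp
  linear_combination -this

lemma Sseq_succ_left (τ δ : ℝ) (n : ℕ) :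
    Sseq τ δ (n+1) = lam1 τ δ ^ n + lam2 τ δ * Sseq τ δ n := by
  rw [Sseq, Sseq, Finset.sum_range_succ']
  simp only [Nat.add_sub_cancel, Nat.sub_zero, pow_zero, mul_one, Finset.mul_sum]
  rw [add_comm]
  congr 1
  apply Finset.sum_congr rfl
  intro k _
  have : n - (k + 1) = n - 1 - k := by omega
  rw [this, pow_succ]
  ring

lemma Sseq_succ_right (τ δ : ℝ) (n : ℕ) :
    Sseq τ δ (n+1) = lam2 τ δ ^ n + lam1 τ δ * Sseq τ δ n := by
  rw [Sseq, Sseq, Finset.sum_range_succ]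
  simp only [Nat.add_sub_cancel, Nat.sub_self, pow_zero, one_mul, Finset.mul_sum]
  rw [add_comm]
  congr 1
  apply Finset.sum_congr rfl
  intro k hk
  have hk' : k < n := Finset.mem_range.mp hk
  have : n - k = (n - 1 - k) + 1 := by omega
  rw [this, pow_succ]
  ring

lemma Sseq_rec (τ δ : ℝ) (n : ℕ) :
    Sseq τ δ (n+2) = τ * Sseq τ δ (n+1) - δ * Sseq τ δ n := by
  have h1 := Sseq_succ_left τ δ (n+1)
  have h2 := Sseq_succ_left τ δ n
  have h3 := lam_add τ δ
  have h4 := lam_mul τ δ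
  have : lam1 τ δ ^ (n+1) = lam1 τ δ * lam1 τ δ ^ n := by rw [pow_succ]; ring
  rw [h1, this]
  have hl1 : lam1 τ δ ^ n = Sseq τ δ (n+1) - lam2 τ δ * Sseq τ δ n := by
    rw [h2]; ring
  rw [hl1]
  linear_combination (Sseq τ δ (n+1)) * h3 - (Sseq τ δ n) * h4

lemma Sseq_eq_sseq (τ δ : ℝ) (n : ℕ) : Sseq τ δ n = ((sseq τ δ n : ℝ) : ℂ) := by
  induction n using Nat.twoStepInduction with
  | zero => simp [Sseq, sseq]
  | one => simp [Sseq, sseq, lam1, lam2]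
  | more n ih1 ih2 =>
    rw [Sseq_rec, ih1, ih2, sseq]
    push_cast
    ring

/-- Case A: real roots, τ ≥ 2√δ. -/
lemma sseq_pos_of_two_sqrt_le (τ δ : ℝ) (hδ0 : 0 < δ) (hτ : 2 * Real.sqrt δ ≤ τ) (n : ℕ) :
    0 ≤ sseq τ δ n ∧ Real.sqrt δ * sseq τ δ n ≤ sseq τ δ (n+1) ∧
      Real.sqrt δ ^ n ≤ sseq τ δ (n+1) := by
  have hs : 0 < Real.sqrt δ := Real.sqrt_pos.mpr hδ0
  have hδ : δ = Real.sqrt δ * Real.sqrt δ := (Real.mul_self_sqrt hδ0.le).symm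
  induction n with
  | zero => simp [sseq]
  | succ n ih =>
    obtain ⟨h0, h1, h2⟩ := ih
    have hp : 0 < sseq τ δ (n+1) := lt_of_lt_of_le (pow_pos hs n) h2
    have key : Real.sqrt δ * sseq τ δ (n+1) ≤ sseq τ δ (n+2) := by
      show Real.sqrt δ * sseq τ δ (n+1) ≤ τ * sseq τ δ (n+1) - δ * sseq τ δ n
      nlinarith
    refine ⟨hp.le, key, ?_⟩
    calc Real.sqrt δ ^ (n+1) = Real.sqrt δ * Real.sqrt δ ^ n := by rw [pow_succ]; ring
    _ ≤ Real.sqrt δ * sseq τ δ (n+1) := by nlinarith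
    _ ≤ sseq τ δ (n+2) := key

/-- Case B: sine formula. -/
lemma sseq_sin (τ δ r θ : ℝ) (hτ : τ = 2 * r * Real.cos θ) (hδ : δ = r ^ 2) (n : ℕ) :
    sseq τ δ (n+1) * Real.sin θ = r ^ n * Real.sin ((n+1 : ℝ) * θ) ∧
    sseq τ δ (n+2) * Real.sin θ = r ^ (n+1) * Real.sin ((n+2 : ℝ) * θ) := by
  induction n with
  | zero =>
    constructor
    · show sseq τ δ 1 * Real.sin θ = _
      simp [sseq]
    · show sseq τ δ 2 * Real.sin θ = _
      show (τ * sseq τ δ 1 - δ * sseq τ δ 0) * Real.sin θ = _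
      simp only [sseq, hτ, mul_zero, sub_zero, mul_one]
      rw [show ((0:ℕ)+2 : ℝ) * θ = 2 * θ by ring, Real.sin_two_mul]
      ring
  | succ n ih =>
    obtain ⟨ih1, ih2⟩ := ih
    refine ⟨by convert ih2 using 3 <;> push_cast <;> ring, ?_⟩
    show (τ * sseq τ δ (n+2) - δ * sseq τ δ (n+1)) * Real.sin θ = _
    have e1 : ((n+1:ℕ)+2 : ℝ) * θ = ((n+2 : ℝ) * θ) + θ := by push_cast; ring
    have e2 : ((n+1 : ℝ)) * θ = ((n+2 : ℝ) * θ) - θ := by ring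
    rw [e1, Real.sin_add]
    have : τ * (sseq τ δ (n+2) * Real.sin θ) - δ * (sseq τ δ (n+1) * Real.sin θ)
        = τ * (r ^ (n+1) * Real.sin ((n+2 : ℝ) * θ)) - δ * (r ^ n * Real.sin ((n+1 : ℝ) * θ)) := by
      rw [ih1, ih2]
    rw [show (τ * sseq τ δ (n+2) - δ * sseq τ δ (n+1)) * Real.sin θ
        = τ * (sseq τ δ (n+2) * Real.sin θ) - δ * (sseq τ δ (n+1) * Real.sin θ) by ring, this,
      e2, Real.sin_sub, hτ, hδ]
    ring

lemma cos_le_cos_of_between (a x : ℝ) (ha0 : 0 ≤ a) (haπ : a ≤ Real.pi)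
    (h1 : a ≤ x) (h2 : x ≤ 2 * Real.pi - a) : Real.cos x ≤ Real.cos a := by
  rcases le_or_gt x Real.pi with hx | hx
  · exact Real.cos_le_cos_of_nonneg_of_le_pi ha0 hx h1
  · rw [← Real.cos_two_pi_sub]
    exact Real.cos_le_cos_of_nonneg_of_le_pi ha0 (by linarith) (by linarith)

/-- Nonnegativity of partial sine sums. -/
lemma sin_sum_nonneg (θ : ℝ) (p m : ℕ) (hθ0 : 0 < θ) (hθp : θ * p ≤ 2 * Real.pi)
    (hθπ : θ < Real.pi) (hm : m ≤ p - 1) (hp : 2 ≤ p) :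
    0 ≤ ∑ j ∈ Finset.range m, Real.sin (((j : ℝ) + 1) * θ) := by
  have hs2 : 0 < Real.sin (θ / 2) :=
    Real.sin_pos_of_pos_of_lt_pi (by linarith) (by linarith [Real.pi_pos])
  have key : 2 * Real.sin (θ/2) * ∑ j ∈ Finset.range m, Real.sin (((j : ℝ) + 1) * θ)
      = Real.cos (θ/2) - Real.cos ((2 * m + 1) * (θ/2)) := by
    rw [Finset.mul_sum]
    have : ∀ j ∈ Finset.range m,
        2 * Real.sin (θ/2) * Real.sin (((j : ℝ) + 1) * θ)
        = Real.cos ((2 * (j:ℝ) + 1) * (θ/2)) - Real.cos ((2 * ((j:ℝ)+1) + 1) * (θ/2)) := by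
      intro j _
      rw [Real.cos_sub_cos]
      rw [show ((2 * (j:ℝ) + 1) * (θ/2) + (2 * ((j:ℝ)+1) + 1) * (θ/2)) / 2 = ((j:ℝ)+1) * θ by ring,
        show ((2 * (j:ℝ) + 1) * (θ/2) - (2 * ((j:ℝ)+1) + 1) * (θ/2)) / 2 = -(θ/2) by ring,
        Real.sin_neg]
      ring
    rw [Finset.sum_congr rfl this]
    have htel := Finset.sum_range_sub' (fun j : ℕ => Real.cos ((2 * (j:ℝ) + 1) * (θ/2))) m
    push_cast at htel
    rw [htel]
    norm_num
  have hππ : 0 < Real.pi := Real.pi_pos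
  have hmp : (m : ℝ) ≤ (p : ℝ) - 1 := by
    have h1 : m + 1 ≤ p := by omega
    have h2 := (Nat.cast_le (α := ℝ)).mpr h1
    push_cast at h2; linarith
  have hcos : Real.cos ((2 * (m:ℝ) + 1) * (θ/2)) ≤ Real.cos (θ/2) := by
    apply cos_le_cos_of_between (θ/2) _ (by linarith) (by linarith)
    · nlinarith [Nat.cast_nonneg (α := ℝ) m]
    · nlinarith
  nlinarith

/-- Abel summation lower bound for the damped sine sum. -/
lemma abel_bound (r θ : ℝ) (p : ℕ) (hr0 : 0 ≤ r) (hr1 : r ≤ 1)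
    (hθ0 : 0 < θ) (hθp : θ * p ≤ 2 * Real.pi) (hθπ : θ < Real.pi) (hp : 2 ≤ p) :
    ∀ m, 2 ≤ m → m ≤ p - 1 →
      r ^ (m-1) * (∑ j ∈ Finset.range m, Real.sin (((j : ℝ) + 1) * θ)) + (1-r) * Real.sin θ
        ≤ ∑ j ∈ Finset.range m, r ^ j * Real.sin (((j : ℝ) + 1) * θ) := by
  intro m hm2
  induction m, hm2 using Nat.le_induction with
  | base =>
    intro _
    apply le_of_eq
    simp only [Finset.sum_range_succ, Finset.sum_range_zero, Nat.cast_zero, Nat.cast_one,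
      pow_zero, pow_one, zero_add]
    ring_nf
  | succ m hm2 ih =>
    intro hmp1
    have hmp : m ≤ p - 1 := by omega
    have IH := ih hmp
    have hσ : 0 ≤ ∑ j ∈ Finset.range m, Real.sin (((j : ℝ) + 1) * θ) :=
      sin_sum_nonneg θ p m hθ0 hθp hθπ hmp hp
    have hpow : r ^ m ≤ r ^ (m-1) := by
      calc r ^ m = r ^ (m-1) * r := by rw [← pow_succ]; congr 1; omega
      _ ≤ r ^ (m-1) * 1 := mul_le_mul_of_nonneg_left hr1 (pow_nonneg hr0 _)
      _ = r ^ (m-1) := mul_one _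
    rw [Finset.sum_range_succ, Finset.sum_range_succ (fun j => r ^ j * Real.sin (((j:ℝ)+1)*θ))]
    have hms : (m+1) - 1 = m := by omega
    rw [hms]
    have hkey : (r ^ m - r ^ (m-1)) * (∑ j ∈ Finset.range m, Real.sin (((j : ℝ) + 1) * θ)) ≤ 0 :=
      mul_nonpos_of_nonpos_of_nonneg (by linarith) hσ
    nlinarith [IH]

lemma sum_Icc_one (f : ℕ → ℝ) (n : ℕ) :
    ∑ i ∈ Finset.Icc 1 n, f i = ∑ i ∈ Finset.range n, f (i+1) := by
  induction n with
  | zero => simp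
  | succ n ih =>
    rw [Finset.sum_Icc_succ_top (by omega), ih, Finset.sum_range_succ]

/-- Let p ≥ 2 and (τ,δ) ∈ 𝒯 with τ ≥ g_{p/2}(δ) = 2√δ cos(2π/p).
Then T_p is a real number and T_p > 0. -/
theorem Tseq_pos (p : ℕ) (hp : 2 ≤ p) (τ δ : ℝ)
    (hδ0 : 0 < δ) (hδ1 : δ < 1) (hτT : |τ| < δ + 1)
    (hge : 2 * Real.sqrt δ * Real.cos (2 * Real.pi / p) ≤ τ) :
    ∃ t : ℝ, Tseq τ δ p = (t : ℂ) ∧ 0 < t := by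
  refine ⟨∑ i ∈ Finset.Icc 1 (p-1), sseq τ δ i, ?_, ?_⟩
  · rw [Tseq]
    push_cast
    exact Finset.sum_congr rfl (fun i _ => Sseq_eq_sseq τ δ i)
  · rw [sum_Icc_one]
    set r := Real.sqrt δ with hrdef
    have hr0 : 0 < r := Real.sqrt_pos.mpr hδ0
    have hδr : δ = r ^ 2 := (Real.sq_sqrt hδ0.le).symm
    have hr1 : r < 1 := by nlinarith
    rcases le_or_gt (2 * r) τ with hA | hB
    · -- real roots case
      apply Finset.sum_pos
      · intro i _
        exact lt_of_lt_of_le (pow_pos hr0 i) (sseq_pos_of_two_sqrt_le τ δ hδ0 hA i).2.2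
      · rw [Finset.nonempty_range_iff]; omega
    · -- complex roots case
      rcases eq_or_lt_of_le hp with hp2 | hp3
      · rw [← hp2]
        norm_num [Finset.sum_range_one, sseq]
      · have hπ := Real.pi_pos
        have hppos : (0:ℝ) < p := by exact_mod_cast (by omega : 0 < p)
        set c := τ / (2*r) with hcdef
        have hc1 : c < 1 := by rw [hcdef, div_lt_one (by positivity)]; linarith
        have hcm : -1 ≤ c := by
          rw [hcdef, le_div_iff₀ (by positivity)]
          nlinarith [Real.neg_one_le_cos (2 * Real.pi / p)]
        set θ := Real.arccos c with hθdef
        have hcos : Real.cos θ = c := Real.cos_arccos hcm hc1.le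
        have hθ0 : 0 < θ := Real.arccos_pos.mpr hc1
        have hθπ' : θ ≤ Real.pi := Real.arccos_le_pi c
        have hθle : θ ≤ 2 * Real.pi / p := by
          by_contra h
          push_neg at h
          have h2 : Real.cos θ < Real.cos (2 * Real.pi / p) :=
            Real.cos_lt_cos_of_nonneg_of_le_pi (by positivity) hθπ' h
          rw [hcos] at h2
          have h3 : Real.cos (2 * Real.pi / p) ≤ c := by
            rw [hcdef, le_div_iff₀ (by positivity)]; linarith
          linarith
        have hθp : θ * p ≤ 2 * Real.pi := (le_div_iff₀ hppos).mp hθle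
        have hθπ : θ < Real.pi := by
          have h3 : (3:ℝ) ≤ p := by exact_mod_cast hp3
          have : 2 * Real.pi / p ≤ 2 * Real.pi / 3 :=
            div_le_div_of_nonneg_left (by positivity) (by norm_num) h3
          linarith
        have hsθ : 0 < Real.sin θ := Real.sin_pos_of_pos_of_lt_pi hθ0 hθπ
        have hτθ : τ = 2 * r * Real.cos θ := by
          rw [hcos, hcdef]
          field_simp
        have hform : ∀ j : ℕ, sseq τ δ (j+1) * Real.sin θ = r ^ j * Real.sin (((j:ℝ)+1) * θ) := by
          intro j
          exact (sseq_sin τ δ r θ hτθ hδr j).1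
        have hB := abel_bound r θ p hr0.le hr1.le hθ0 hθp hθπ (by omega) (p-1) (by omega) le_rfl
        have hσ := sin_sum_nonneg θ p (p-1) hθ0 hθp hθπ le_rfl (by omega)
        have ht2 : (∑ i ∈ Finset.range (p-1), sseq τ δ (i+1)) * Real.sin θ
            = ∑ j ∈ Finset.range (p-1), r ^ j * Real.sin (((j:ℝ)+1) * θ) := by
          rw [Finset.sum_mul]
          exact Finset.sum_congr rfl (fun j _ => hform j)
        have hlow : (1-r) * Real.sin θ ≤ (∑ i ∈ Finset.range (p-1), sseq τ δ (i+1)) * Real.sin θ := by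
          rw [ht2]
          nlinarith [mul_nonneg (pow_nonneg hr0.le (p-1-1)) hσ]
        nlinarith [mul_pos (show (0:ℝ) < 1 - r by linarith) hsθ]
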